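/- Let q = 2^m, s ≥ 1 with gcd(s, m) = 1, and for μ ∈ F_{q^3} let n_i be the number of μ ∈ F_{q^3} with dim_{F_2} ker(f_μ) = i, where f_μ(x) = x^{2^s q} + μ x^{2^s} + x. Then n_0 + n_1 + n_2 + n_3 = q^3 and n_1 + 3 n_2 + 7 n_3 = q^3 − 1, hence n_0 = 1 + 2 n_2 + 6 n_3. -/

import Mathlib

open Finset Subgroup

section aux

variable {K : Type*} [Field K] [Fintype K]


private lemma pow_fix_mul {a : K} {s : ℕ} (h : a ^ 2 ^ s = a) (k : ℕ) : a ^ 2 ^ (k * s) = a := by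
  induction k with
  | zero => simp
  | succ k ih =>
    have h2 : (2:ℕ) ^ ((k + 1) * s) = 2 ^ (k * s) * 2 ^ s := by
      rw [← pow_add, Nat.succ_mul]
    rw [h2, pow_mul, ih, h]

private lemma sq_fix {a : K} {s m : ℕ} (hm : 0 < m) (hgcd : Nat.gcd s m = 1)
    (h1 : a ^ 2 ^ s = a) (h2 : a ^ 2 ^ m = a) : a ^ 2 = a := by
  rcases eq_or_lt_of_le (show 1 ≤ m from hm) with h | h
  · rw [← h] at h2; simpa using h2
  · obtain ⟨u, -, hu⟩ := Nat.exists_mul_mod_eq_one_of_coprime (hgcd : Nat.Coprime s m) h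
    have hdiv : s * u = m * (s * u / m) + 1 := by
      conv_lhs => rw [← Nat.div_add_mod (s * u) m]
      rw [hu]
    have ha : a ^ 2 ^ (u * s) = a := pow_fix_mul h1 u
    rw [mul_comm u s, hdiv] at ha
    have hb : a ^ 2 ^ (m * (s * u / m)) = a := by rw [mul_comm]; exact pow_fix_mul h2 _
    rwa [pow_succ, pow_mul, hb] at ha

private lemma char_two' (m : ℕ) (hK : Fintype.card K = 2 ^ (3 * m)) :
    CharP K 2 := by
  obtain ⟨n, hp, hc⟩ := FiniteField.card K (ringChar K)
  have h2 : ringChar K = 2 := by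
    have hdvd : ringChar K ∣ 2 ^ (3 * m) := by
      rw [← hK, hc]; exact dvd_pow_self _ n.ne_zero
    exact (Nat.prime_dvd_prime_iff_eq hp Nat.prime_two).mp (hp.dvd_of_dvd_pow hdvd)
  rw [← h2]; exact ringChar.charP K

private lemma card_ker_le_eight (m s : ℕ) (hm : 0 < m) (hs : 1 ≤ s)
    (hgcd : Nat.gcd s m = 1) (hK : Fintype.card K = 2 ^ (3 * m)) (μ : K) :
    Nat.card {x : K | x ^ (2 ^ s * 2 ^ m) + μ * x ^ 2 ^ s + x = 0} ≤ 8 := by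
  classical
  haveI hch : CharP K 2 := char_two' m hK
  haveI : Fact (Nat.Prime 2) := ⟨Nat.prime_two⟩
  set ψm : K →+* K := iterateFrobenius K 2 m with hψm
  have hbij : Function.Bijective ψm := Finite.injective_iff_bijective.mp ψm.injective
  set τ : RingAut K := RingEquiv.ofBijective ψm hbij with hτdef
  have hτ_def : ∀ x : K, τ x = x ^ 2 ^ m := fun x => rfl
  have hτ3 : τ ^ 3 = 1 := by
    ext x
    have h1 : (τ ^ 3) x = τ (τ (τ x)) := rfl
    rw [h1, hτ_def, hτ_def, hτ_def, ← pow_mul, ← pow_mul]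
    show x ^ (2 ^ m * (2 ^ m * 2 ^ m)) = x
    rw [← pow_add, ← pow_add]
    have h3 : m + (m + m) = 3 * m := by ring
    rw [h3, ← hK]
    exact FiniteField.pow_card x
  have hford : IsOfFinOrder τ := isOfFinOrder_iff_pow_eq_one.mpr ⟨3, by norm_num, hτ3⟩
  set G := Subgroup.zpowers τ with hG
  haveI hGfin : Finite ↥G := (finite_zpowers.mpr hford).to_subtype
  haveI : Fintype ↥G := Fintype.ofFinite _
  have hcardG : Fintype.card ↥G ≤ 3 := by
    rw [← Nat.card_eq_fintype_card, hG, Nat.card_zpowers]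
    exact Nat.le_of_dvd (by norm_num) (orderOf_dvd_of_pow_eq_one hτ3)
  letI actG : MulSemiringAction ↥G K := MulSemiringAction.compHom K G.subtype
  have hsmul : ∀ (g : ↥G) (x : K), g • x = (g : RingAut K) x := fun _ _ => rfl
  set F := FixedPoints.subfield ↥G K with hF
  have hFmem : ∀ a : K, a ∈ F ↔ a ^ 2 ^ m = a := by
    intro a
    constructor
    · intro h
      have h2 : τ a = a := h ⟨τ, Subgroup.mem_zpowers τ⟩
      rwa [hτ_def] at h2
    · intro h g
      have hτst : τ ∈ MulAction.stabilizer (RingAut K) a := by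
        rw [MulAction.mem_stabilizer_iff]
        show τ a = a
        rw [hτ_def]; exact h
      have hg : (g : RingAut K) ∈ MulAction.stabilizer (RingAut K) a :=
        (Subgroup.zpowers_le.mpr hτst) g.2
      exact hg
  haveI hFD : FiniteDimensional F K :=
    inferInstanceAs (FiniteDimensional ↥(FixedPoints.subfield ↥G K) K)
  have hrank : Module.finrank F K ≤ 3 := le_trans (FixedPoints.finrank_le_card ↥G K) hcardG
  set V : Set K := {x : K | x ^ (2 ^ s * 2 ^ m) + μ * x ^ 2 ^ s + x = 0} with hV
  obtain ⟨b, hbV, hspan, hli⟩ := exists_linearIndependent F V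
  haveI : Fintype ↥b := Fintype.ofFinite _
  have hcardb : Fintype.card ↥b ≤ 3 := le_trans hli.fintype_card_le_finrank hrank
  have hmem_b : ∀ i : ↥b, (i : K) ^ 2 ^ (s + m) + μ * (i : K) ^ 2 ^ s + (i : K) = 0 := by
    intro i
    have h0 : (i : K) ∈ V := hbV i.2
    rw [hV, Set.mem_setOf_eq] at h0
    rw [pow_add]
    exact h0
  have char2K : (2 : K) = 0 := CharTwo.two_eq_zero
  have hkey : ∀ w ∈ V, ∃ f : ↥b → Bool, ∑ i : ↥b, (if f i then (i : K) else 0) = w := by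
    intro w hw
    have hw' : w ∈ Submodule.span F b := by
      rw [hspan]; exact Submodule.subset_span hw
    rw [← Subtype.range_coe (s := b), Submodule.mem_span_range_iff_exists_fun] at hw'
    obtain ⟨c, hc⟩ := hw'
    have hwV : w ^ 2 ^ (s + m) + μ * w ^ 2 ^ s + w = 0 := by
      rw [hV, Set.mem_setOf_eq] at hw
      rw [pow_add]
      exact hw
    have hsm : ∀ (a : F) (x : K), a • x = (a : K) * x := fun a x => rfl
    have hfrob : ∀ (t : ℕ) (x y : K), (x + y) ^ 2 ^ t = x ^ 2 ^ t + y ^ 2 ^ t :=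
      fun t x y => add_pow_char_pow x y 2 t
    have hexp : ∀ t : ℕ, w ^ 2 ^ t = ∑ i : ↥b, ((c i : K) * (i : K)) ^ 2 ^ t := by
      intro t
      rw [← hc]
      have h := map_sum (iterateFrobenius K 2 t) (fun i : ↥b => c i • (i : K)) Finset.univ
      simpa only [iterateFrobenius_def, hsm] using h
    have hcF : ∀ i : ↥b, (c i : K) ^ 2 ^ m = (c i : K) := fun i => (hFmem _).mp (c i).2
    have hcsm : ∀ i : ↥b, (c i : K) ^ 2 ^ (s + m) = (c i : K) ^ 2 ^ s := by
      intro i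
      have he : (2:ℕ) ^ (s + m) = 2 ^ m * 2 ^ s := by rw [← pow_add]; ring_nf
      rw [he, pow_mul, hcF]
    have hE : ∑ i : ↥b, (((c i : K) ^ 2 ^ s + (c i : K)) * (i : K)) = 0 := by
      calc ∑ i : ↥b, (((c i : K) ^ 2 ^ s + (c i : K)) * (i : K))
          = w ^ 2 ^ (s + m) + μ * w ^ 2 ^ s + w := by
            rw [hexp (s + m), hexp s, ← hc, Finset.mul_sum, ← Finset.sum_add_distrib,
              ← Finset.sum_add_distrib]
            apply Finset.sum_congr rfl
            intro i _
            have hi := hmem_b i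
            rw [hsm, mul_pow, mul_pow, hcsm]
            linear_combination ((c i : K) ^ 2 ^ s) * hi -
              ((c i : K) ^ 2 ^ s * ((i:K) ^ 2 ^ (s+m) + μ * (i:K) ^ 2 ^ s)) * char2K
        _ = 0 := hwV
    have hdmem : ∀ i : ↥b, ((c i : K) ^ 2 ^ s + (c i : K)) ∈ F := by
      intro i
      rw [hFmem, hfrob m, hcF i, ← pow_mul, mul_comm ((2:ℕ) ^ s) ((2:ℕ) ^ m), pow_mul, hcF i]
    have hzero : ∀ i : ↥b, (c i : K) ^ 2 ^ s = (c i : K) := by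
      have hsum0 : (∑ j : ↥b, (⟨(c j : K) ^ 2 ^ s + (c j : K), hdmem j⟩ : F) • (j : K)) = 0 := by
        rw [← hE]
        exact Finset.sum_congr rfl fun j _ => hsm _ _
      intro i
      have hall := Fintype.linearIndependent_iff.mp hli
        (fun j => (⟨(c j : K) ^ 2 ^ s + (c j : K), hdmem j⟩ : F)) hsum0 i
      have hv : (c i : K) ^ 2 ^ s + (c i : K) = 0 := by
        simpa using congrArg Subtype.val hall
      linear_combination hv - (c i : K) * char2K
    have hsq : ∀ i : ↥b, (c i : K) = 0 ∨ (c i : K) = 1 := by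
      intro i
      have hsqi : (c i : K) ^ 2 = (c i : K) := sq_fix hm hgcd (hzero i) (hcF i)
      have hz : (c i : K) * ((c i : K) - 1) = 0 := by linear_combination hsqi
      rcases mul_eq_zero.mp hz with h | h
      · exact Or.inl h
      · exact Or.inr (by linear_combination h)
    refine ⟨fun i => decide ((c i : K) = 1), ?_⟩
    rw [← hc]
    apply Finset.sum_congr rfl
    intro i _
    rw [hsm]
    rcases hsq i with h | h
    · simp [h]
    · simp [h]
  -- conclude the cardinality bound
  set g : (↥b → Bool) → K := fun f => ∑ i : ↥b, (if f i then (i : K) else 0) with hg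
  have hVsub : V ⊆ Set.range g := by
    intro w hw
    obtain ⟨f, hf⟩ := hkey w hw
    exact ⟨f, hf⟩
  have h1 : Nat.card ↥V ≤ Nat.card ↥(Set.range g) :=
    Nat.card_mono (Set.toFinite _) hVsub
  have h2 : Nat.card ↥(Set.range g) ≤ Nat.card (↥b → Bool) :=
    Nat.card_le_card_of_surjective _ Set.rangeFactorization_surjective
  have h3 : Nat.card (↥b → Bool) = 2 ^ Fintype.card ↥b := by
    rw [Nat.card_eq_fintype_card, Fintype.card_fun, Fintype.card_bool]
  have h4 : (2:ℕ) ^ Fintype.card ↥b ≤ 2 ^ 3 := Nat.pow_le_pow_right (by norm_num) hcardb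
  calc Nat.card ↥V ≤ Nat.card (↥b → Bool) := le_trans h1 h2
    _ ≤ 8 := by rw [h3]; exact h4

end aux

/-- Let `q = 2^m`, `gcd(s,m) = 1`, and for `i ∈ {0,1,2,3}` let
`n i` be the number of `μ ∈ F_{q^3}` such that the kernel of
`f_μ(x) = x^{2^s q} + μ x^{2^s} + x` has `F_2`-dimension `i` (cardinality `2^i`).
Then `n 0 + n 1 + n 2 + n 3 = q^3`, `n 1 + 3 n 2 + 7 n 3 = q^3 − 1`, and
`n 0 = 1 + 2 n 2 + 6 n 3`. -/
theorem stmt16 {K : Type*} [Field K] [Fintype K] (m s : ℕ) (hm : 0 < m) (hs : 1 ≤ s)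
    (hgcd : Nat.gcd s m = 1) (hK : Fintype.card K = 2 ^ (3 * m)) (n : ℕ → ℕ)
    (hn : ∀ i, n i = Nat.card {μ : K |
      Nat.card {x : K | x ^ (2 ^ s * 2 ^ m) + μ * x ^ 2 ^ s + x = 0} = 2 ^ i}) :
    n 0 + n 1 + n 2 + n 3 = (2 ^ m) ^ 3 ∧
    n 1 + 3 * n 2 + 7 * n 3 = (2 ^ m) ^ 3 - 1 ∧
    n 0 = 1 + 2 * n 2 + 6 * n 3 := by
  classical
  haveI hch : CharP K 2 := char_two' m hK
  have char2K : (2 : K) = 0 := CharTwo.two_eq_zero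
  set km : K → ℕ :=
    fun μ => Nat.card {x : K | x ^ (2 ^ s * 2 ^ m) + μ * x ^ 2 ^ s + x = 0} with hkm
  have hexp0 : (2:ℕ) ^ s * 2 ^ m ≠ 0 := by positivity
  have hs0 : (2:ℕ) ^ s ≠ 0 := by positivity
  have hfr1 : ∀ x y : K, (x + y) ^ (2 ^ s * 2 ^ m) = x ^ (2^s*2^m) + y ^ (2^s*2^m) := by
    intro x y
    rw [← pow_add]
    exact add_pow_char_pow x y 2 (s + m)
  have hfr2 : ∀ x y : K, (x + y) ^ (2 ^ s : ℕ) = x ^ (2^s:ℕ) + y ^ (2^s:ℕ) :=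
    fun x y => add_pow_char_pow x y 2 s
  -- each kernel is an additive subgroup, so its cardinality divides |K|
  have hdvd : ∀ μ : K, km μ ∣ 2 ^ (3 * m) := by
    intro μ
    let W : AddSubgroup K :=
      { carrier := {x : K | x ^ (2 ^ s * 2 ^ m) + μ * x ^ 2 ^ s + x = 0}
        zero_mem' := by simp [zero_pow hexp0, zero_pow hs0]
        add_mem' := by
          intro a b ha hb
          simp only [Set.mem_setOf_eq] at ha hb ⊢
          rw [hfr1, hfr2]
          linear_combination ha + hb
        neg_mem' := by
          intro a ha
          simpa [CharTwo.neg_eq] using ha }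
    have h1 : km μ = Nat.card W := rfl
    have h3 : Nat.card K = 2 ^ (3 * m) := by rw [Nat.card_eq_fintype_card, hK]
    rw [h1]
    exact h3 ▸ AddSubgroup.card_addSubgroup_dvd_card W
  have hle8 : ∀ μ : K, km μ ≤ 8 := fun μ => card_ker_le_eight m s hm hs hgcd hK μ
  have hclass : ∀ μ : K, km μ = 1 ∨ km μ = 2 ∨ km μ = 4 ∨ km μ = 8 := by
    intro μ
    obtain ⟨i, hile, hi⟩ := (Nat.dvd_prime_pow Nat.prime_two).mp (hdvd μ)
    have h8 := hle8 μ
    rw [hi] at h8 ⊢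
    have hi3 : i ≤ 3 := by
      by_contra hgt
      push_neg at hgt
      have : 2 ^ 4 ≤ 2 ^ i := Nat.pow_le_pow_right (by norm_num) hgt
      omega
    interval_cases i <;> simp
  set T : Finset ℕ := {1, 2, 4, 8} with hT
  have hmap : ∀ μ : K, μ ∈ (Finset.univ : Finset K) → km μ ∈ T := by
    intro μ _
    rcases hclass μ with h | h | h | h <;> simp [hT, h]
  -- n i as a filter-card
  have hni : ∀ i, n i = (Finset.univ.filter (fun μ : K => km μ = 2 ^ i)).card := by
    intro i
    rw [hn i, Nat.card_eq_fintype_card]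
    exact Fintype.card_subtype _
  have hn0 : n 0 = (Finset.univ.filter (fun μ : K => km μ = 1)).card := by
    rw [hni 0]; norm_num
  have hn1 : n 1 = (Finset.univ.filter (fun μ : K => km μ = 2)).card := by
    rw [hni 1]; norm_num
  have hn2 : n 2 = (Finset.univ.filter (fun μ : K => km μ = 4)).card := by
    rw [hni 2]; norm_num
  have hn3 : n 3 = (Finset.univ.filter (fun μ : K => km μ = 8)).card := by
    rw [hni 3]; norm_num
  have hTsum : ∀ f : ℕ → ℕ, ∑ v ∈ T, f v = f 1 + f 2 + f 4 + f 8 := by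
    intro f
    rw [hT]
    rw [show ({1, 2, 4, 8} : Finset ℕ) = insert 1 (insert 2 (insert 4 {8})) from rfl]
    rw [Finset.sum_insert (by decide), Finset.sum_insert (by decide),
      Finset.sum_insert (by decide), Finset.sum_singleton]
    ring
  have hpow3 : (2:ℕ) ^ (3 * m) = (2 ^ m) ^ 3 := by rw [mul_comm, pow_mul]
  -- first identity
  have eq1 : n 0 + n 1 + n 2 + n 3 = (2 ^ m) ^ 3 := by
    have hfib := Finset.card_eq_sum_card_fiberwise hmap
    rw [Finset.card_univ, hK, hTsum] at hfib
    rw [hn0, hn1, hn2, hn3, ← hpow3, hfib]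
  -- second identity
  have hkmfilter : ∀ μ : K, km μ =
      (Finset.univ.filter (fun x : K => x ^ (2 ^ s * 2 ^ m) + μ * x ^ 2 ^ s + x = 0)).card := by
    intro μ
    show Nat.card {x : K | x ^ (2 ^ s * 2 ^ m) + μ * x ^ 2 ^ s + x = 0} = _
    rw [Nat.card_eq_fintype_card]
    exact Fintype.card_subtype _
  have h0mem : ∀ μ : K, (0:K) ∈
      Finset.univ.filter (fun x : K => x ^ (2 ^ s * 2 ^ m) + μ * x ^ 2 ^ s + x = 0) := by
    intro μ
    simp [zero_pow hexp0, zero_pow hs0]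
  have herase : ∀ μ : K,
      (Finset.univ.filter
        (fun x : K => (x ^ (2 ^ s * 2 ^ m) + μ * x ^ 2 ^ s + x = 0) ∧ x ≠ 0)).card
      = km μ - 1 := by
    intro μ
    have hset : Finset.univ.filter
        (fun x : K => (x ^ (2 ^ s * 2 ^ m) + μ * x ^ 2 ^ s + x = 0) ∧ x ≠ 0)
        = (Finset.univ.filter
            (fun x : K => x ^ (2 ^ s * 2 ^ m) + μ * x ^ 2 ^ s + x = 0)).erase 0 := by
      ext x
      simp only [Finset.mem_filter, Finset.mem_erase, Finset.mem_univ, true_and]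
      tauto
    rw [hset, Finset.card_erase_of_mem (h0mem μ), hkmfilter μ]
  -- double counting over nonzero x
  set f0 : K → K := fun x => (x ^ (2 ^ s * 2 ^ m) + x) / x ^ (2 ^ s : ℕ) with hf0
  have hfibset : ∀ μ : K,
      (Finset.univ.erase 0).filter (fun x => f0 x = μ)
      = Finset.univ.filter
          (fun x : K => (x ^ (2 ^ s * 2 ^ m) + μ * x ^ 2 ^ s + x = 0) ∧ x ≠ 0) := by
    intro μ
    ext x
    simp only [Finset.mem_filter, Finset.mem_erase, Finset.mem_univ, true_and, and_true, hf0]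
    constructor
    · rintro ⟨hx, hf⟩
      have hxs : x ^ (2^s:ℕ) ≠ 0 := pow_ne_zero _ hx
      rw [div_eq_iff hxs] at hf
      refine ⟨?_, hx⟩
      linear_combination hf + (μ * x ^ (2^s:ℕ)) * char2K
    · rintro ⟨hP, hx⟩
      have hxs : x ^ (2^s:ℕ) ≠ 0 := pow_ne_zero _ hx
      refine ⟨hx, ?_⟩
      rw [div_eq_iff hxs]
      linear_combination hP - (μ * x ^ (2^s:ℕ)) * char2K
  have hcount : ∑ μ : K, (km μ - 1) = 2 ^ (3 * m) - 1 := by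
    have hfib2 := Finset.card_eq_sum_card_fiberwise
      (s := Finset.univ.filter (fun x : K => x ≠ 0)) (t := Finset.univ) (f := f0)
      (fun x _ => Finset.mem_univ _)
    rw [Finset.filter_ne' Finset.univ 0, Finset.card_erase_of_mem (Finset.mem_univ 0),
      Finset.card_univ, hK] at hfib2
    rw [hfib2]
    apply Finset.sum_congr rfl
    intro μ _
    rw [hfibset μ, herase μ]
  -- sum over fibers
  have eq2 : n 1 + 3 * n 2 + 7 * n 3 = (2 ^ m) ^ 3 - 1 := by
    have hsumfib := Finset.sum_fiberwise_of_maps_to hmap (fun μ => km μ - 1)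
    rw [hcount, hTsum] at hsumfib
    have hinner : ∀ v : ℕ, (∑ μ ∈ Finset.univ.filter (fun μ : K => km μ = v), (km μ - 1))
        = (Finset.univ.filter (fun μ : K => km μ = v)).card * (v - 1) := by
      intro v
      rw [Finset.sum_congr rfl (fun μ hμ => by
        rw [(Finset.mem_filter.mp hμ).2]), Finset.sum_const, smul_eq_mul]
    rw [hinner 1, hinner 2, hinner 4, hinner 8] at hsumfib
    norm_num at hsumfib
    rw [hn1, hn2, hn3, ← hpow3]
    omega
  refine ⟨eq1, eq2, ?_⟩
  have hge1 : 1 ≤ (2 ^ m) ^ 3 := Nat.one_le_pow _ _ (Nat.pow_pos (n := m) (by norm_num))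
  omega
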